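/- arXiv:2406.08776 — 2 statements merged into one kernel-verified Lean document; each statement's English description precedes it below -/
import Mathlib

section
/- Let P ∈ ℝ^{n×n} and W ∈ ℝ^{n×p} with joint subspace M = C(P) ∩ C(W) and individual subspaces R¹ = C(P_{M⊥}P), R² = C(P_{M⊥}W), all assumed nonzero with dimensions r_M, r₁, r₂. Then there exist matrices M ∈ O_{n,r_M}, R⁽¹⁾ ∈ O_{n,r₁}, R⁽²⁾ ∈ O_{n,r₂} with orthonormal columns spanning these subspaces, and full-rank matrices Γ⁽¹⁾ ∈ ℝ^{(r_M+r₁)×n}, Γ⁽²⁾ ∈ ℝ^{(r_M+r₂)×p}, such that P = (M R⁽¹⁾)Γ⁽¹⁾, W = (M R⁽²⁾)Γ⁽²⁾, and MᵀR⁽ᵏ⁾ = 0 for k = 1,2. -/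
open Matrix Module

/-- The column space of a matrix, as a submodule of Euclidean space. -/
noncomputable def colSpaceE {n : ℕ} {q : Type*} [Fintype q] [DecidableEq q]
    (A : Matrix (Fin n) q ℝ) : Submodule ℝ (EuclideanSpace ℝ (Fin n)) :=
  LinearMap.range (Matrix.toEuclideanLin A)

/-- The matrix of the orthogonal projection onto a subspace `K` of Euclidean space. -/
noncomputable def projMat {n : ℕ} (K : Submodule ℝ (EuclideanSpace ℝ (Fin n))) :
    Matrix (Fin n) (Fin n) ℝ :=
  Matrix.toEuclideanLin.symm ((K.subtypeL.comp K.orthogonalProjectionOnto).toLinearMap)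

section Helpers

variable {n : ℕ} {q q' : Type*} [Fintype q] [DecidableEq q] [Fintype q'] [DecidableEq q']

lemma tel_apply {m : Type*} [Fintype m] [DecidableEq m] (A : Matrix m q ℝ)
    (x : EuclideanSpace ℝ q) : Matrix.toEuclideanLin A x = A *ᵥ x := rfl

lemma tel_mul {m : Type*} [Fintype m] [DecidableEq m]
    (A : Matrix m q' ℝ) (B : Matrix q' q ℝ) :
    Matrix.toEuclideanLin (A * B) = (toEuclideanLin A).comp (toEuclideanLin B) := by
  apply LinearMap.ext; intro x
  show WithLp.toLp 2 ((A * B) *ᵥ x.ofLp) = WithLp.toLp 2 (A *ᵥ (B *ᵥ x.ofLp))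
  rw [mulVec_mulVec]

lemma tel_one : Matrix.toEuclideanLin (1 : Matrix q q ℝ) = LinearMap.id := by
  apply LinearMap.ext; intro x
  show WithLp.toLp 2 ((1 : Matrix q q ℝ) *ᵥ x.ofLp) = x
  rw [one_mulVec]

lemma rank_eq_colSpaceE (A : Matrix (Fin n) q ℝ) : A.rank = finrank ℝ (colSpaceE A) := by
  have h : Submodule.map (WithLp.linearEquiv 2 ℝ (Fin n → ℝ) :
      EuclideanSpace ℝ (Fin n) →ₗ[ℝ] (Fin n → ℝ)) (colSpaceE A)
      = LinearMap.range A.mulVecLin := by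
    ext v
    simp only [Submodule.mem_map, colSpaceE, LinearMap.mem_range]
    constructor
    · rintro ⟨y, ⟨x, rfl⟩, rfl⟩
      exact ⟨x, rfl⟩
    · rintro ⟨x, rfl⟩
      exact ⟨Matrix.toEuclideanLin A (WithLp.toLp 2 x), ⟨_, rfl⟩, rfl⟩
  rw [Matrix.rank, ← h, LinearEquiv.finrank_map_eq]

lemma esum_apply {ι : Type*} [Fintype ι] (f : ι → EuclideanSpace ℝ (Fin n)) (i : Fin n) :
    (∑ j, f j) i = ∑ j, f j i := by
  have := map_sum (EuclideanSpace.proj (𝕜 := ℝ) i) f Finset.univ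
  simp only [PiLp.proj_apply] at this
  exact this

lemma exists_on_matrix {r : ℕ} (K : Submodule ℝ (EuclideanSpace ℝ (Fin n)))
    (h : finrank ℝ K = r) :
    ∃ A : Matrix (Fin n) (Fin r) ℝ, Aᵀ * A = 1 ∧ colSpaceE A = K := by
  let b : OrthonormalBasis (Fin r) ℝ K := (stdOrthonormalBasis ℝ K).reindex (finCongr h)
  refine ⟨Matrix.of (fun i j => (b j : EuclideanSpace ℝ (Fin n)) i), ?_, ?_⟩
  · ext i j
    have := b.orthonormal
    rw [orthonormal_iff_ite] at this
    have h2 := this i j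
    rw [Submodule.coe_inner] at h2
    simp only [PiLp.inner_apply, RCLike.inner_apply, conj_trivial] at h2
    simp only [Matrix.mul_apply, transpose_apply, of_apply, Matrix.one_apply]
    rw [← h2]
    exact Finset.sum_congr rfl (fun _ _ => mul_comm _ _)
  · ext v
    simp only [colSpaceE, LinearMap.mem_range]
    constructor
    · rintro ⟨x, rfl⟩
      show WithLp.toLp 2 (Matrix.of (fun i j => (b j : EuclideanSpace ℝ (Fin n)) i) *ᵥ x.ofLp) ∈ K
      have : WithLp.toLp 2 ((Matrix.of (fun i j => (b j : EuclideanSpace ℝ (Fin n)) i)) *ᵥ x.ofLp)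
          = ((∑ j, x j • b j : K) : EuclideanSpace ℝ (Fin n)) := by
        ext i
        simp only [PiLp.toLp_apply, Matrix.mulVec, dotProduct, of_apply]
        rw [show (((∑ j, _ • _ : K) : EuclideanSpace ℝ (Fin n))) i
          = ∑ j, _ from by rw [Submodule.coe_sum]; exact esum_apply _ i]
        simp [mul_comm, PiLp.smul_apply, smul_eq_mul]
      rw [this]
      exact ((∑ j, x j • b j : K)).2
    · intro hv
      refine ⟨(WithLp.equiv 2 _).symm (fun j => b.repr ⟨v, hv⟩ j), ?_⟩
      have hb : ((∑ j, b.repr ⟨v, hv⟩ j • b j : K) : EuclideanSpace ℝ (Fin n)) = v := by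
        rw [b.sum_repr ⟨v, hv⟩]
      have h3 : WithLp.toLp 2 ((Matrix.of (fun i j => (b j : EuclideanSpace ℝ (Fin n)) i)) *ᵥ
          (fun j => b.repr ⟨v, hv⟩ j))
          = ((∑ j, b.repr ⟨v, hv⟩ j • b j : K) : EuclideanSpace ℝ (Fin n)) := by
        ext i
        simp only [PiLp.toLp_apply, Matrix.mulVec, dotProduct, of_apply]
        rw [show (((∑ j, _ • _ : K) : EuclideanSpace ℝ (Fin n))) i
          = ∑ j, _ from by rw [Submodule.coe_sum]; exact esum_apply _ i]
        simp [mul_comm, PiLp.smul_apply, smul_eq_mul]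
      exact h3.trans hb

lemma col_mem_colSpaceE (A : Matrix (Fin n) q ℝ) (i : q) :
    WithLp.toLp 2 (fun k => A k i) ∈ colSpaceE A := by
  refine ⟨WithLp.toLp 2 (Pi.single i 1), ?_⟩
  show WithLp.toLp 2 (A *ᵥ Pi.single i 1) = _
  ext k
  simp [Matrix.mulVec_single]

lemma colspace_orth (A : Matrix (Fin n) q ℝ) (B : Matrix (Fin n) q' ℝ)
    (K : Submodule ℝ (EuclideanSpace ℝ (Fin n)))
    (hA : colSpaceE A ≤ K) (hB : colSpaceE B ≤ Kᗮ) : Aᵀ * B = 0 := by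
  ext i j
  have hu := hA (col_mem_colSpaceE A i)
  have hw := hB (col_mem_colSpaceE B j)
  have h0 := (Submodule.mem_orthogonal K _).mp hw _ hu
  simp only [PiLp.inner_apply, PiLp.toLp_apply, RCLike.inner_apply, conj_trivial] at h0
  simp only [Matrix.mul_apply, transpose_apply, Matrix.zero_apply]
  rw [← h0]
  exact Finset.sum_congr rfl (fun _ _ => mul_comm _ _)

lemma colSpaceE_fromCols {r s : ℕ} (A : Matrix (Fin n) (Fin r) ℝ)
    (B : Matrix (Fin n) (Fin s) ℝ) :
    colSpaceE (fromCols A B) = colSpaceE A ⊔ colSpaceE B := by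
  apply le_antisymm
  · rintro v ⟨x, rfl⟩
    show WithLp.toLp 2 (fromCols A B *ᵥ x.ofLp) ∈ _
    have : fromCols A B *ᵥ x.ofLp
        = A *ᵥ (fun i => x (Sum.inl i)) + B *ᵥ (fun j => x (Sum.inr j)) := by
      ext k
      simp [Matrix.mulVec, dotProduct, fromCols, Fintype.sum_sum_type, PiLp.add_apply]
    rw [this, WithLp.toLp_add]
    exact Submodule.add_mem_sup ⟨WithLp.toLp 2 (fun i => x (Sum.inl i)), rfl⟩
      ⟨WithLp.toLp 2 (fun j => x (Sum.inr j)), rfl⟩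
  · rw [sup_le_iff]
    constructor <;> rintro v ⟨x, rfl⟩
    · refine ⟨WithLp.toLp 2 (Sum.elim x.ofLp 0), ?_⟩
      show WithLp.toLp 2 (fromCols A B *ᵥ Sum.elim x.ofLp 0) = WithLp.toLp 2 (A *ᵥ x.ofLp)
      rw [fromCols_mulVec_sumElim, mulVec_zero, add_zero]
    · refine ⟨WithLp.toLp 2 (Sum.elim 0 x.ofLp), ?_⟩
      show WithLp.toLp 2 (fromCols A B *ᵥ Sum.elim 0 x.ofLp) = WithLp.toLp 2 (B *ᵥ x.ofLp)
      rw [fromCols_mulVec_sumElim, mulVec_zero, zero_add]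

lemma tel_projMat (K : Submodule ℝ (EuclideanSpace ℝ (Fin n))) :
    Matrix.toEuclideanLin (projMat K)
      = (K.subtypeL.comp K.orthogonalProjectionOnto).toLinearMap :=
  LinearEquiv.apply_symm_apply _ _

lemma ker_tel_projMat_orth (K : Submodule ℝ (EuclideanSpace ℝ (Fin n))) :
    LinearMap.ker (Matrix.toEuclideanLin (projMat Kᗮ)) = K := by
  rw [tel_projMat]
  ext x
  simp only [LinearMap.mem_ker, ContinuousLinearMap.coe_coe, ContinuousLinearMap.comp_apply,
    Submodule.subtypeL_apply, Submodule.coe_eq_zero]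
  rw [Submodule.orthogonalProjectionOnto_eq_zero_iff, Submodule.orthogonal_orthogonal]

/-- The main per-matrix construction: given `M` spanning `MS`, produce `R` and `Γ`. -/
lemma aux_decomp {p' rM rk : ℕ} (P : Matrix (Fin n) (Fin p') ℝ)
    (MS RS : Submodule ℝ (EuclideanSpace ℝ (Fin n)))
    (M : Matrix (Fin n) (Fin rM) ℝ)
    (hM1 : Mᵀ * M = 1) (hMcol : colSpaceE M = MS)
    (hle : MS ≤ colSpaceE P)
    (hRS : RS = colSpaceE (projMat MSᗮ * P))
    (hrM : finrank ℝ MS = rM) (hrk : finrank ℝ RS = rk) :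
    ∃ (R : Matrix (Fin n) (Fin rk) ℝ) (Γ : Matrix (Fin rM ⊕ Fin rk) (Fin p') ℝ),
      Rᵀ * R = 1 ∧ colSpaceE R = RS ∧ Γ.rank = min (rM + rk) p' ∧
      P = Matrix.fromCols M R * Γ ∧ Mᵀ * R = 0 := by
  obtain ⟨R, hR1, hRcol⟩ := exists_on_matrix RS hrk
  -- RS is inside MSᗮ
  have hRle : RS ≤ MSᗮ := by
    rw [hRS]
    rintro v ⟨x, rfl⟩
    rw [tel_mul]
    show Matrix.toEuclideanLin (projMat MSᗮ) (Matrix.toEuclideanLin P x) ∈ MSᗮ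
    rw [tel_projMat]
    exact Submodule.coe_mem _
  have hMR : Mᵀ * R = 0 :=
    colspace_orth M R MS (le_of_eq hMcol) (hRcol ▸ hRle)
  set Q : Matrix (Fin n) (Fin rM ⊕ Fin rk) ℝ := Matrix.fromCols M R with hQ
  have hQ1 : Qᵀ * Q = 1 := by
    rw [hQ, transpose_fromCols, fromRows_mul_fromCols, hM1, hR1, hMR]
    have : Rᵀ * M = 0 := by
      have := congrArg Matrix.transpose hMR
      rwa [transpose_mul, transpose_transpose, transpose_zero] at this
    rw [this, fromBlocks_one]
  have hQcol : colSpaceE Q = MS ⊔ RS := by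
    rw [hQ, colSpaceE_fromCols, hMcol, hRcol]
  -- C(P) ≤ MS ⊔ RS
  have hPle : colSpaceE P ≤ MS ⊔ RS := by
    rintro v ⟨x, rfl⟩
    have hsplit := Submodule.starProjection_add_starProjection_orthogonal (K := MS)
      (Matrix.toEuclideanLin P x)
    have hmem2 : ((MSᗮ.orthogonalProjectionOnto (Matrix.toEuclideanLin P x)) :
        EuclideanSpace ℝ (Fin n)) ∈ RS := by
      rw [hRS]
      refine ⟨x, ?_⟩
      rw [tel_mul]
      show Matrix.toEuclideanLin (projMat MSᗮ) (Matrix.toEuclideanLin P x) = _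
      rw [tel_projMat]
      rfl
    rw [← hsplit]
    exact Submodule.add_mem_sup (Submodule.coe_mem _) hmem2
  set Γ : Matrix (Fin rM ⊕ Fin rk) (Fin p') ℝ := Qᵀ * P with hΓ
  have hfact : P = Q * Γ := by
    apply Matrix.toEuclideanLin.injective
    apply LinearMap.ext; intro x
    rw [hΓ, tel_mul, tel_mul]
    have hv : Matrix.toEuclideanLin P x ∈ colSpaceE Q := by
      rw [hQcol]; exact hPle ⟨x, rfl⟩
    obtain ⟨y, hy⟩ := hv
    simp only [LinearMap.comp_apply]
    rw [← hy]
    have : Matrix.toEuclideanLin Qᵀ (Matrix.toEuclideanLin Q y)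
        = Matrix.toEuclideanLin (Qᵀ * Q) y := by rw [tel_mul]; rfl
    rw [this, hQ1, tel_one]
    rfl
  -- rank computation
  have hrankP : P.rank = rM + rk := by
    have hrn := LinearMap.finrank_range_add_finrank_ker
      ((Matrix.toEuclideanLin (projMat MSᗮ)) ∘ₗ (colSpaceE P).subtype)
    have hrange : LinearMap.range
        ((Matrix.toEuclideanLin (projMat MSᗮ)) ∘ₗ (colSpaceE P).subtype) = RS := by
      have hcs : colSpaceE (projMat MSᗮ * P)
          = Submodule.map (Matrix.toEuclideanLin (projMat MSᗮ)) (colSpaceE P) := by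
        rw [colSpaceE, tel_mul, LinearMap.range_comp]
        rfl
      rw [LinearMap.range_comp, Submodule.range_subtype, hRS, hcs]
    have hker : LinearMap.ker
        ((Matrix.toEuclideanLin (projMat MSᗮ)) ∘ₗ (colSpaceE P).subtype)
        = Submodule.comap (colSpaceE P).subtype MS := by
      rw [LinearMap.ker_comp, ker_tel_projMat_orth]
    rw [hrange, hker] at hrn
    have hcomap : finrank ℝ (Submodule.comap (colSpaceE P).subtype MS) = rM := by
      rw [← hrM]
      exact (Submodule.comapSubtypeEquivOfLe hle).finrank_eq
    rw [hrk, hcomap] at hrn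
    rw [rank_eq_colSpaceE, ← hrn, add_comm]
  have hrankΓ : Γ.rank = rM + rk := by
    have e1 : Γ.rank ≤ P.rank := by rw [hΓ]; exact rank_mul_le_right _ _
    have e2 : P.rank ≤ Γ.rank := by
      nth_rewrite 1 [hfact]
      exact rank_mul_le_right _ _
    rw [← hrankP]
    exact le_antisymm e1 e2
  have hle' : rM + rk ≤ p' := hrankP ▸ P.rank_le_width
  exact ⟨R, Γ, hR1, hRcol, by rw [hrankΓ, min_eq_left hle'], hfact, hMR⟩

end Helpers

/-- Identifiability decomposition: with the joint subspace `M = C(P) ∩ C(W)` and individual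
subspaces `R¹ = C(P_{M⊥}P)`, `R² = C(P_{M⊥}W)` all nonzero, with dimensions `r_M, r₁, r₂`,
there exist matrices with orthonormal columns spanning them and full-rank matrices `Γ⁽ᵏ⁾`
with `P = (M R⁽¹⁾)Γ⁽¹⁾`, `W = (M R⁽²⁾)Γ⁽²⁾` and `MᵀR⁽ᵏ⁾ = 0`. -/
theorem joint_individual_decomposition {n p rM r₁ r₂ : ℕ}
    (P : Matrix (Fin n) (Fin n) ℝ) (W : Matrix (Fin n) (Fin p) ℝ)
    (MS : Submodule ℝ (EuclideanSpace ℝ (Fin n)))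
    (R1S R2S : Submodule ℝ (EuclideanSpace ℝ (Fin n)))
    (hMS : MS = colSpaceE P ⊓ colSpaceE W)
    (hR1S : R1S = colSpaceE (projMat MSᗮ * P))
    (hR2S : R2S = colSpaceE (projMat MSᗮ * W))
    (hMne : MS ≠ ⊥) (hR1ne : R1S ≠ ⊥) (hR2ne : R2S ≠ ⊥)
    (hrM : Module.finrank ℝ MS = rM)
    (hr₁ : Module.finrank ℝ R1S = r₁)
    (hr₂ : Module.finrank ℝ R2S = r₂) :
    ∃ (M : Matrix (Fin n) (Fin rM) ℝ)
      (R₁ : Matrix (Fin n) (Fin r₁) ℝ) (R₂ : Matrix (Fin n) (Fin r₂) ℝ)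
      (Γ₁ : Matrix (Fin rM ⊕ Fin r₁) (Fin n) ℝ)
      (Γ₂ : Matrix (Fin rM ⊕ Fin r₂) (Fin p) ℝ),
      Mᵀ * M = 1 ∧ R₁ᵀ * R₁ = 1 ∧ R₂ᵀ * R₂ = 1 ∧
      colSpaceE M = MS ∧ colSpaceE R₁ = R1S ∧ colSpaceE R₂ = R2S ∧
      Γ₁.rank = min (rM + r₁) n ∧ Γ₂.rank = min (rM + r₂) p ∧
      P = Matrix.fromCols M R₁ * Γ₁ ∧
      W = Matrix.fromCols M R₂ * Γ₂ ∧
      Mᵀ * R₁ = 0 ∧ Mᵀ * R₂ = 0 := by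
  obtain ⟨M, hM1, hMcol⟩ := exists_on_matrix MS hrM
  have hleP : MS ≤ colSpaceE P := by rw [hMS]; exact inf_le_left
  have hleW : MS ≤ colSpaceE W := by rw [hMS]; exact inf_le_right
  obtain ⟨R₁, Γ₁, hR11, hR1col, hΓ₁rank, hPfact, hMR1⟩ :=
    aux_decomp P MS R1S M hM1 hMcol hleP hR1S hrM hr₁
  obtain ⟨R₂, Γ₂, hR21, hR2col, hΓ₂rank, hWfact, hMR2⟩ :=
    aux_decomp W MS R2S M hM1 hMcol hleW hR2S hrM hr₂
  exact ⟨M, R₁, R₂, Γ₁, Γ₂, hM1, hR11, hR21, hMcol, hR1col, hR2col,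
    hΓ₁rank, hΓ₂rank, hPfact, hWfact, hMR1, hMR2⟩
end

section
/- Fix R⁽¹⁾ ∈ O_{n,r₁} and R⁽²⁾ ∈ O_{n,r₂}, data matrices A' ∈ ℝ^{n×n}, X ∈ ℝ^{n×p}, and rank r_M. Set Y = (P_{C(R⁽¹⁾)⊥}A' P_{C(R⁽²⁾)⊥}X) and R = (R⁽¹⁾ R⁽²⁾), and suppose rank(P_{C(R)⊥}Y) ≥ r_M. Then M̂, defined as the matrix of the r_M leading left singular vectors of P_{C(R)⊥}Y, is a global minimizer of the function f(M) = ‖A' − P_{C(M)}A' − P_{C(R⁽¹⁾)}A'‖_F² + ‖X − P_{C(M)}X − P_{C(R⁽²⁾)}X‖_F² over all M ∈ O_{n,r_M} with MᵀR⁽¹⁾ = 0 and MᵀR⁽²⁾ = 0. -/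
open Matrix

/-- The squared Frobenius norm of a real matrix. -/
noncomputable def frobSq {m q : Type*} [Fintype m] [Fintype q] (A : Matrix m q ℝ) : ℝ :=
  ∑ i, ∑ j, (A i j) ^ 2

/-- The `n × r` matrix whose columns are eigenvectors of the Hermitian matrix `A`
corresponding to its `r` largest eigenvalues (column `0` to the largest). -/
noncomputable def leadingEigvecs {N : ℕ} (A : Matrix (Fin N) (Fin N) ℝ)
    (hA : A.IsHermitian) (r : ℕ) (h : r ≤ N) : Matrix (Fin N) (Fin r) ℝ :=
  Matrix.of fun i j =>
    (hA.eigenvectorUnitary : Matrix (Fin N) (Fin N) ℝ) i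
      (Tuple.sort hA.eigenvalues (Fin.rev (Fin.castLE h j)))

section Aux

open RealInnerProductSpace

lemma frobSq_eq_trace {m q : Type*} [Fintype m] [Fintype q] (A : Matrix m q ℝ) :
    frobSq A = Matrix.trace (Aᵀ * A) := by
  simp only [frobSq, Matrix.trace, Matrix.diag, Matrix.mul_apply, Matrix.transpose_apply, sq]
  rw [Finset.sum_comm]

lemma frobSq_eq_trace' {m q : Type*} [Fintype m] [Fintype q] (A : Matrix m q ℝ) :
    frobSq A = Matrix.trace (A * Aᵀ) := by
  rw [frobSq_eq_trace, Matrix.trace_mul_comm]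

lemma frobSq_fromColumns {m q r : Type*} [Fintype m] [Fintype q] [Fintype r]
    (B : Matrix m q ℝ) (C : Matrix m r ℝ) :
    frobSq (Matrix.fromCols B C) = frobSq B + frobSq C := by
  simp [frobSq, Matrix.fromCols, Fintype.sum_sum_type, Finset.sum_add_distrib]

lemma frobSq_sub_proj {n rM : ℕ} {q : Type*} [Fintype q]
    (M : Matrix (Fin n) (Fin rM) ℝ) (W : Matrix (Fin n) q ℝ) (hM : Mᵀ * M = 1) :
    frobSq (W - M * Mᵀ * W) = frobSq W - frobSq (Mᵀ * W) := by
  rw [frobSq_eq_trace, frobSq_eq_trace, frobSq_eq_trace]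
  have key : (W - M * Mᵀ * W)ᵀ * (W - M * Mᵀ * W) = Wᵀ * W - (Mᵀ * W)ᵀ * (Mᵀ * W) := by
    simp only [Matrix.transpose_sub, Matrix.transpose_mul, Matrix.transpose_transpose,
      Matrix.sub_mul, Matrix.mul_sub, Matrix.mul_assoc]
    rw [← Matrix.mul_assoc Mᵀ M, hM, Matrix.one_mul]
    abel
  rw [key, Matrix.trace_sub]

lemma weighted_sum_le {N : ℕ} (μ c : Fin N → ℝ) (T : Finset (Fin N)) (t : ℝ)
    (hc0 : ∀ i, 0 ≤ c i) (hc1 : ∀ i, c i ≤ 1) (hsum : ∑ i, c i = T.card)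
    (hT : ∀ i ∈ T, t ≤ μ i) (hT' : ∀ i ∉ T, μ i ≤ t) :
    ∑ i, μ i * c i ≤ ∑ i ∈ T, μ i := by
  have hsplit : ∑ i ∈ T, μ i * c i + ∑ i ∈ Tᶜ, μ i * c i = ∑ i, μ i * c i :=
    Finset.sum_add_sum_compl T _
  have hcsplit : ∑ i ∈ T, c i + ∑ i ∈ Tᶜ, c i = ∑ i, c i :=
    Finset.sum_add_sum_compl T _
  have hA : ∑ i ∈ T, (μ i * c i - μ i) ≤ ∑ i ∈ T, t * (c i - 1) := by
    refine Finset.sum_le_sum fun i hi => ?_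
    nlinarith [hc1 i, hT i hi]
  have hB : ∑ i ∈ Tᶜ, μ i * c i ≤ ∑ i ∈ Tᶜ, t * c i := by
    refine Finset.sum_le_sum fun i hi => ?_
    nlinarith [hc0 i, hT' i (Finset.mem_compl.mp hi)]
  rw [Finset.sum_sub_distrib] at hA
  have e1 : ∑ i ∈ T, t * (c i - 1) = t * (∑ i ∈ T, c i - T.card) := by
    simp [mul_sub, Finset.sum_sub_distrib, Finset.mul_sum, Finset.sum_const, nsmul_eq_mul,
      mul_comm]
  have e2 : ∑ i ∈ Tᶜ, t * c i = t * ∑ i ∈ Tᶜ, c i := (Finset.mul_sum _ _ _).symm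
  rw [e1] at hA
  rw [e2] at hB
  have e3 : t * (∑ i ∈ T, c i - T.card) + t * ∑ i ∈ Tᶜ, c i = 0 := by
    rw [← mul_add, show (∑ i ∈ T, c i - (T.card : ℝ)) + ∑ i ∈ Tᶜ, c i = 0 by linarith,
      mul_zero]
  linarith [hA, hB, hsplit, e3]

lemma projMat_mulVec {n : ℕ} (K : Submodule ℝ (EuclideanSpace ℝ (Fin n)))
    (v : EuclideanSpace ℝ (Fin n)) :
    projMat K *ᵥ v = (K.orthogonalProjectionOnto v : EuclideanSpace ℝ (Fin n)) := by
  have h : Matrix.toEuclideanLin (projMat K) =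
      (K.subtypeL.comp K.orthogonalProjectionOnto).toLinearMap :=
    LinearEquiv.apply_symm_apply _ _
  have := LinearMap.congr_fun h v
  simpa [Matrix.toEuclideanLin_apply] using congrArg WithLp.ofLp this

lemma projMat_transpose {n : ℕ} (K : Submodule ℝ (EuclideanSpace ℝ (Fin n))) :
    (projMat K)ᵀ = projMat K := by
  ext i j
  have key : ∀ a b : Fin n, projMat K a b =
      (projMat K *ᵥ (EuclideanSpace.single b 1 : EuclideanSpace ℝ (Fin n))) a := by
    intro a b
    simp [Matrix.mulVec, dotProduct, EuclideanSpace.single_apply]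
  have inEq : ∀ (a : Fin n) (w : EuclideanSpace ℝ (Fin n)),
      w a = ⟪(EuclideanSpace.single a 1 : EuclideanSpace ℝ (Fin n)), w⟫ := by
    intro a w
    simp [EuclideanSpace.inner_single_left]
  rw [Matrix.transpose_apply, key j i, key i j, projMat_mulVec, projMat_mulVec,
    inEq j ((K.orthogonalProjectionOnto (EuclideanSpace.single i 1) : EuclideanSpace ℝ (Fin n))),
    inEq i ((K.orthogonalProjectionOnto (EuclideanSpace.single j 1) : EuclideanSpace ℝ (Fin n)))]
  rw [← K.starProjection_apply, ← K.starProjection_apply, ← Submodule.inner_starProjection_left_eq_right]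
  exact real_inner_comm _ _

lemma projMat_mul_eq_self {n : ℕ} {q : Type*} [Fintype q]
    (K : Submodule ℝ (EuclideanSpace ℝ (Fin n))) (A : Matrix (Fin n) q ℝ)
    (h : ∀ j, (WithLp.equiv 2 (Fin n → ℝ)).symm (fun i => A i j) ∈ K) :
    projMat K * A = A := by
  ext i j
  have h1 := congrFun (projMat_mulVec K ((WithLp.equiv 2 (Fin n → ℝ)).symm (fun k => A k j))) i
  rw [← K.starProjection_apply, Submodule.starProjection_eq_self_iff.mpr (h j)] at h1
  exact h1

lemma projMat_mul_eq_zero {n : ℕ} {q : Type*} [Fintype q]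
    (K : Submodule ℝ (EuclideanSpace ℝ (Fin n))) (A : Matrix (Fin n) q ℝ)
    (h : ∀ j, (WithLp.equiv 2 (Fin n → ℝ)).symm (fun i => A i j) ∈ Kᗮ) :
    projMat K * A = 0 := by
  ext i j
  have h1 := congrFun (projMat_mulVec K ((WithLp.equiv 2 (Fin n → ℝ)).symm (fun k => A k j))) i
  rw [Submodule.orthogonalProjectionOnto_apply_of_mem_orthogonal (h j)] at h1
  exact h1

lemma col_mem_colSpaceE_left {n r₁ r₂ : ℕ} (R₁ : Matrix (Fin n) (Fin r₁) ℝ)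
    (R₂ : Matrix (Fin n) (Fin r₂) ℝ) (j : Fin r₁) :
    (WithLp.equiv 2 (Fin n → ℝ)).symm (fun i => R₁ i j) ∈
      colSpaceE (Matrix.fromCols R₁ R₂) := by
  refine ⟨(WithLp.equiv 2 (Fin r₁ ⊕ Fin r₂ → ℝ)).symm (Sum.elim (Pi.single j 1) 0), ?_⟩
  rw [Matrix.toEuclideanLin_apply_piLp_toLp]
  congr 1
  show R₁.fromCols R₂ *ᵥ (Sum.elim (Pi.single j 1) 0) = fun i => R₁ i j
  rw [Matrix.fromCols_mulVec_sumElim]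
  simp [Matrix.mulVec_single]
  rfl

lemma col_mem_colSpaceE_right {n r₁ r₂ : ℕ} (R₁ : Matrix (Fin n) (Fin r₁) ℝ)
    (R₂ : Matrix (Fin n) (Fin r₂) ℝ) (j : Fin r₂) :
    (WithLp.equiv 2 (Fin n → ℝ)).symm (fun i => R₂ i j) ∈
      colSpaceE (Matrix.fromCols R₁ R₂) := by
  refine ⟨(WithLp.equiv 2 (Fin r₁ ⊕ Fin r₂ → ℝ)).symm (Sum.elim 0 (Pi.single j 1)), ?_⟩
  rw [Matrix.toEuclideanLin_apply_piLp_toLp]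
  congr 1
  show R₁.fromCols R₂ *ᵥ (Sum.elim 0 (Pi.single j 1)) = fun i => R₂ i j
  rw [Matrix.fromCols_mulVec_sumElim]
  simp [Matrix.mulVec_single]
  rfl

lemma col_mem_orth {n rM r₁ r₂ : ℕ} (R₁ : Matrix (Fin n) (Fin r₁) ℝ)
    (R₂ : Matrix (Fin n) (Fin r₂) ℝ) (M : Matrix (Fin n) (Fin rM) ℝ)
    (h1 : Mᵀ * R₁ = 0) (h2 : Mᵀ * R₂ = 0) (j : Fin rM) :
    (WithLp.equiv 2 (Fin n → ℝ)).symm (fun i => M i j) ∈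
      (colSpaceE (Matrix.fromCols R₁ R₂))ᗮ := by
  rw [Submodule.mem_orthogonal]
  rintro u ⟨x, rfl⟩
  set v : Fin n → ℝ := fun i => M i j with hv
  have h0 : v ᵥ* (Matrix.fromCols R₁ R₂) = 0 := by
    ext (k | k)
    · have : (v ᵥ* Matrix.fromCols R₁ R₂) (Sum.inl k) = (Mᵀ * R₁) j k := by
        simp [Matrix.vecMul, Matrix.mul_apply, dotProduct, Matrix.fromCols, hv]
      rw [this, h1]; rfl
    · have : (v ᵥ* Matrix.fromCols R₁ R₂) (Sum.inr k) = (Mᵀ * R₂) j k := by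
        simp [Matrix.vecMul, Matrix.mul_apply, dotProduct, Matrix.fromCols, hv]
      rw [this, h2]; rfl
  have key : ⟪Matrix.toEuclideanLin (Matrix.fromCols R₁ R₂) x,
      (WithLp.equiv 2 (Fin n → ℝ)).symm v⟫ =
      v ⬝ᵥ (Matrix.fromCols R₁ R₂ *ᵥ (WithLp.equiv 2 _ x)) := by
    simp [Matrix.toEuclideanLin_apply, PiLp.inner_apply, dotProduct, mul_comm]
  rw [key, dotProduct_mulVec, h0, zero_dotProduct]

end Aux

set_option maxHeartbeats 2000000 in
/-- Fixing `R⁽¹⁾, R⁽²⁾` with orthonormal columns, setting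
`Y = (P_{C(R⁽¹⁾)⊥}A'  P_{C(R⁽²⁾)⊥}X)`, `R = (R⁽¹⁾ R⁽²⁾)`, and `Z = P_{C(R)⊥}Y` with
`rank Z ≥ r_M`, the matrix `M̂` of the `r_M` leading left singular vectors of `Z`
(equivalently, the leading eigenvectors of `Z Zᵀ`) is a global minimizer of
`M ↦ ‖A' − P_{C(M)}A' − P_{C(R⁽¹⁾)}A'‖_F² + ‖X − P_{C(M)}X − P_{C(R⁽²⁾)}X‖_F²`
over all `M ∈ O_{n,r_M}` with `MᵀR⁽¹⁾ = 0` and `MᵀR⁽²⁾ = 0`. -/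
theorem leading_singvecs_minimize {n p rM r₁ r₂ : ℕ} (hrMn : rM ≤ n)
    (R₁ : Matrix (Fin n) (Fin r₁) ℝ) (R₂ : Matrix (Fin n) (Fin r₂) ℝ)
    (hR₁ : R₁ᵀ * R₁ = 1) (hR₂ : R₂ᵀ * R₂ = 1)
    (A' : Matrix (Fin n) (Fin n) ℝ) (X : Matrix (Fin n) (Fin p) ℝ)
    (Y : Matrix (Fin n) (Fin n ⊕ Fin p) ℝ)
    (hY : Y = Matrix.fromCols ((1 - R₁ * R₁ᵀ) * A') ((1 - R₂ * R₂ᵀ) * X))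
    (Z : Matrix (Fin n) (Fin n ⊕ Fin p) ℝ)
    (hZ : Z = (1 - projMat (colSpaceE (Matrix.fromCols R₁ R₂))) * Y)
    (hrank : rM ≤ Z.rank)
    (Mh : Matrix (Fin n) (Fin rM) ℝ)
    (hMh : Mh = leadingEigvecs (Z * Zᵀ) (isHermitian_mul_conjTranspose_self Z) rM hrMn) :
    Mhᵀ * Mh = 1 ∧ Mhᵀ * R₁ = 0 ∧ Mhᵀ * R₂ = 0 ∧
    ∀ M : Matrix (Fin n) (Fin rM) ℝ, Mᵀ * M = 1 → Mᵀ * R₁ = 0 → Mᵀ * R₂ = 0 →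
      frobSq (A' - Mh * Mhᵀ * A' - R₁ * R₁ᵀ * A') +
          frobSq (X - Mh * Mhᵀ * X - R₂ * R₂ᵀ * X) ≤
        frobSq (A' - M * Mᵀ * A' - R₁ * R₁ᵀ * A') +
          frobSq (X - M * Mᵀ * X - R₂ * R₂ᵀ * X) := by
  classical
  set K := colSpaceE (Matrix.fromCols R₁ R₂) with hK
  have hS : (Z * Zᵀ).IsHermitian := isHermitian_mul_conjTranspose_self Z
  set S : Matrix (Fin n) (Fin n) ℝ := Z * Zᵀ with hS_def
  set μ : Fin n → ℝ := hS.eigenvalues with hμ_def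
  set U : Matrix (Fin n) (Fin n) ℝ := (hS.eigenvectorUnitary : Matrix (Fin n) (Fin n) ℝ)
    with hU_def
  set σ : Equiv.Perm (Fin n) := Tuple.sort μ with hσ_def
  set ι : Fin rM → Fin n := fun j => σ (Fin.rev (Fin.castLE hrMn j)) with hι_def
  have hMh' : ∀ i j, Mh i j = U i (ι j) := by
    intro i j; rw [hMh]; rfl
  have hι : Function.Injective ι := by
    intro a b hab
    have h2 : Fin.rev (Fin.castLE hrMn a) = Fin.rev (Fin.castLE hrMn b) := σ.injective hab
    have h3 : Fin.castLE hrMn a = Fin.castLE hrMn b := Fin.rev_injective h2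
    exact Fin.ext (by simpa using congrArg Fin.val h3)
  -- unitary facts
  have hstar : star U = Uᵀ := by
    rw [Matrix.star_eq_conjTranspose, Matrix.conjTranspose_eq_transpose_of_trivial]
  have hUUt : U * Uᵀ = 1 := by
    rw [← hstar]; exact Matrix.mem_unitaryGroup_iff.mp hS.eigenvectorUnitary.2
  have hUtU : Uᵀ * U = 1 := by
    rw [← hstar]; exact Matrix.mem_unitaryGroup_iff'.mp hS.eigenvectorUnitary.2
  have hspec : S = U * Matrix.diagonal μ * Uᵀ := by
    have h := hS.spectral_theorem
    rw [Unitary.conjStarAlgAut_apply, hstar] at h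
    simpa using h
  -- eigencolumn equation
  have hSMh : S * Mh = Mh * Matrix.diagonal (fun j => μ (ι j)) := by
    ext i j
    have hv : (fun k => Mh k j) = ⇑(hS.eigenvectorBasis (ι j)) := by
      funext k; rw [hMh' k j]; rfl
    have hcol : (S * Mh) i j = (S *ᵥ fun k => Mh k j) i := by
      simp [Matrix.mul_apply, Matrix.mulVec, dotProduct]
    rw [hcol, hv, hS.mulVec_eigenvectorBasis, Matrix.mul_diagonal]
    rw [Pi.smul_apply, smul_eq_mul, ← congrFun hv i]
    show μ (ι j) * Mh i j = Mh i j * μ (ι j)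
    ring
  have hMhtMh : Mhᵀ * Mh = 1 := by
    ext j k
    have h1 : (Mhᵀ * Mh) j k = (Uᵀ * U) (ι j) (ι k) := by
      simp [Matrix.mul_apply, hMh']
    rw [h1, hUtU]
    by_cases h : j = k
    · subst h; simp [Matrix.one_apply]
    · rw [Matrix.one_apply_ne fun hc => h (hι hc), Matrix.one_apply_ne h]
  -- eigenvalues nonneg, and top rM nonzero
  have hZH : Zᴴ = Zᵀ := Matrix.conjTranspose_eq_transpose_of_trivial Z
  have hμ0 : ∀ i, 0 ≤ μ i := by
    intro i
    have hpsd : (Z * Zᴴ).PosSemidef := Matrix.posSemidef_self_mul_conjTranspose Z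
    rw [hZH] at hpsd
    exact hpsd.eigenvalues_nonneg i
  have hcard : rM ≤ Fintype.card {i // μ i ≠ 0} := by
    have h1 : S.rank = Z.rank := by rw [hS_def, ← hZH]; exact Matrix.rank_self_mul_conjTranspose Z
    have h2 := hS.rank_eq_card_non_zero_eigs
    rw [← hμ_def] at h2
    omega
  have hmono : Monotone (μ ∘ σ) := Tuple.monotone_sort μ
  have hμι : ∀ j : Fin rM, μ (ι j) ≠ 0 := by
    intro j hzero
    set k : Fin n := Fin.rev (Fin.castLE hrMn j) with hk
    have hkval : (k : ℕ) = n - 1 - (j : ℕ) := by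
      simp only [hk, Fin.val_rev, Fin.coe_castLE]
      omega
    have hgt : ∀ l : Fin n, μ (σ l) ≠ 0 → k < l := by
      intro l hl
      by_contra hle
      push_neg at hle
      have hmle : μ (σ l) ≤ μ (σ k) := hmono hle
      have : μ (σ l) = 0 := le_antisymm (by rw [← hzero]; exact hmle) (hμ0 _)
      exact hl this
    have hEquiv : Fintype.card {i // μ i ≠ 0} = Fintype.card {l // μ (σ l) ≠ 0} :=
      Fintype.card_congr
        ((Equiv.subtypeEquiv σ (fun l => by simp)).symm)
    have hsub : Fintype.card {l // μ (σ l) ≠ 0} ≤ Fintype.card {l : Fin n // k < l} :=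
      Fintype.card_subtype_mono _ _ (fun l hl => hgt l hl)
    have hIoi : Fintype.card {l : Fin n // k < l} = n - 1 - (k : ℕ) := by
      rw [Fintype.card_congr (Equiv.subtypeEquivRight (fun l => Iff.rfl) :
        {l : Fin n // k < l} ≃ {l : Fin n // l ∈ Set.Ioi k})]
      simp [Fintype.card_subtype, Finset.filter_lt_eq_Ioi, Fin.card_Ioi]
    have hjlt : (j : ℕ) < rM := j.isLt
    have hjn : (j : ℕ) < n := lt_of_lt_of_le hjlt hrMn
    omega
  -- projection facts
  have hPsym : (projMat K)ᵀ = projMat K := projMat_transpose K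
  have hPR₁ : projMat K * R₁ = R₁ :=
    projMat_mul_eq_self _ _ (fun j => col_mem_colSpaceE_left R₁ R₂ j)
  have hPR₂ : projMat K * R₂ = R₂ :=
    projMat_mul_eq_self _ _ (fun j => col_mem_colSpaceE_right R₁ R₂ j)
  have hZR₁ : R₁ᵀ * Z = 0 := by
    have hRP : R₁ᵀ * projMat K = R₁ᵀ := by
      have h := congrArg Matrix.transpose hPR₁
      rw [Matrix.transpose_mul, hPsym] at h
      exact h
    rw [hZ, ← Matrix.mul_assoc, Matrix.mul_sub, Matrix.mul_one, hRP, sub_self, Matrix.zero_mul]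
  have hZR₂ : R₂ᵀ * Z = 0 := by
    have hRP : R₂ᵀ * projMat K = R₂ᵀ := by
      have h := congrArg Matrix.transpose hPR₂
      rw [Matrix.transpose_mul, hPsym] at h
      exact h
    rw [hZ, ← Matrix.mul_assoc, Matrix.mul_sub, Matrix.mul_one, hRP, sub_self, Matrix.zero_mul]
  -- Mh satisfies the orthogonality constraints
  have hRS₁ : R₁ᵀ * S = 0 := by rw [hS_def, ← Matrix.mul_assoc, hZR₁, Matrix.zero_mul]
  have hRS₂ : R₂ᵀ * S = 0 := by rw [hS_def, ← Matrix.mul_assoc, hZR₂, Matrix.zero_mul]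
  have hMhR₁ : Mhᵀ * R₁ = 0 := by
    have h0 : R₁ᵀ * Mh * Matrix.diagonal (fun j => μ (ι j)) = 0 := by
      rw [Matrix.mul_assoc, ← hSMh, ← Matrix.mul_assoc, hRS₁, Matrix.zero_mul]
    have h1 : R₁ᵀ * Mh = 0 := by
      ext a b
      have h2 := congrFun (congrFun h0 a) b
      rw [Matrix.mul_diagonal] at h2
      have := mul_eq_zero.mp h2
      rcases this with h | h
      · exact h
      · exact absurd h (hμι b)
    have h := congrArg Matrix.transpose h1
    rw [Matrix.transpose_mul, Matrix.transpose_transpose] at h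
    simpa using h
  have hMhR₂ : Mhᵀ * R₂ = 0 := by
    have h0 : R₂ᵀ * Mh * Matrix.diagonal (fun j => μ (ι j)) = 0 := by
      rw [Matrix.mul_assoc, ← hSMh, ← Matrix.mul_assoc, hRS₂, Matrix.zero_mul]
    have h1 : R₂ᵀ * Mh = 0 := by
      ext a b
      have h2 := congrFun (congrFun h0 a) b
      rw [Matrix.mul_diagonal] at h2
      have := mul_eq_zero.mp h2
      rcases this with h | h
      · exact h
      · exact absurd h (hμι b)
    have h := congrArg Matrix.transpose h1
    rw [Matrix.transpose_mul, Matrix.transpose_transpose] at h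
    simpa using h
  -- objective value formula
  have hval : ∀ M : Matrix (Fin n) (Fin rM) ℝ, Mᵀ * M = 1 → Mᵀ * R₁ = 0 → Mᵀ * R₂ = 0 →
      frobSq (A' - M * Mᵀ * A' - R₁ * R₁ᵀ * A') + frobSq (X - M * Mᵀ * X - R₂ * R₂ᵀ * X)
        = frobSq Y - frobSq (Mᵀ * Z) := by
    intro M hM h1 h2
    set B := (1 - R₁ * R₁ᵀ) * A' with hB_def
    set C := (1 - R₂ * R₂ᵀ) * X with hC_def
    have hBexp : B = A' - R₁ * R₁ᵀ * A' := by
      rw [hB_def, Matrix.sub_mul, Matrix.one_mul]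
    have hCexp : C = X - R₂ * R₂ᵀ * X := by
      rw [hC_def, Matrix.sub_mul, Matrix.one_mul]
    have hzero₁ : M * Mᵀ * (R₁ * R₁ᵀ * A') = 0 := by
      rw [Matrix.mul_assoc R₁, Matrix.mul_assoc M, ← Matrix.mul_assoc Mᵀ, h1,
        Matrix.zero_mul, Matrix.mul_zero]
    have hzero₂ : M * Mᵀ * (R₂ * R₂ᵀ * X) = 0 := by
      rw [Matrix.mul_assoc R₂, Matrix.mul_assoc M, ← Matrix.mul_assoc Mᵀ, h2,
        Matrix.zero_mul, Matrix.mul_zero]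
    have hMB : M * Mᵀ * B = M * Mᵀ * A' := by
      rw [hBexp, Matrix.mul_sub, hzero₁, sub_zero]
    have hMC : M * Mᵀ * C = M * Mᵀ * X := by
      rw [hCexp, Matrix.mul_sub, hzero₂, sub_zero]
    have hB1 : A' - M * Mᵀ * A' - R₁ * R₁ᵀ * A' = B - M * Mᵀ * B := by
      rw [hMB, hBexp]; abel
    have hC1 : X - M * Mᵀ * X - R₂ * R₂ᵀ * X = C - M * Mᵀ * C := by
      rw [hMC, hCexp]; abel
    have hPM : projMat K * M = 0 :=
      projMat_mul_eq_zero _ _ (fun j => col_mem_orth R₁ R₂ M h1 h2 j)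
    have hMP : Mᵀ * projMat K = 0 := by
      have h := congrArg Matrix.transpose hPM
      rw [Matrix.transpose_mul, hPsym] at h
      simpa using h
    have hMZ : Mᵀ * Z = Mᵀ * Y := by
      rw [hZ, ← Matrix.mul_assoc, Matrix.mul_sub, Matrix.mul_one, hMP, sub_zero]
    have hMY : Mᵀ * Y = Matrix.fromCols (Mᵀ * B) (Mᵀ * C) := by
      rw [hY, Matrix.mul_fromCols]
    have hfY : frobSq Y = frobSq B + frobSq C := by
      rw [hY]; exact frobSq_fromColumns _ _
    have hfMZ : frobSq (Mᵀ * Z) = frobSq (Mᵀ * B) + frobSq (Mᵀ * C) := by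
      rw [hMZ, hMY]; exact frobSq_fromColumns _ _
    rw [hB1, hC1, frobSq_sub_proj M B hM, frobSq_sub_proj M C hM, hfY, hfMZ]
    ring
  refine ⟨hMhtMh, hMhR₁, hMhR₂, ?_⟩
  intro M hM h1 h2
  rw [hval Mh hMhtMh hMhR₁ hMhR₂, hval M hM h1 h2]
  have key : frobSq (Mᵀ * Z) ≤ frobSq (Mhᵀ * Z) := by
    -- trace formulas
    have htr : ∀ V : Matrix (Fin n) (Fin rM) ℝ,
        frobSq (Vᵀ * Z) = Matrix.trace (Vᵀ * S * V) := by
      intro V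
      rw [frobSq_eq_trace']
      congr 1
      rw [Matrix.transpose_mul, Matrix.transpose_transpose, hS_def]
      simp only [Matrix.mul_assoc]
    -- value at Mh
    have hMhval : frobSq (Mhᵀ * Z) = ∑ j, μ (ι j) := by
      rw [htr Mh, Matrix.mul_assoc, hSMh, ← Matrix.mul_assoc, hMhtMh, Matrix.one_mul,
        Matrix.trace_diagonal]
    -- value at M
    set G : Matrix (Fin n) (Fin rM) ℝ := Uᵀ * M with hG_def
    set c : Fin n → ℝ := fun i => (G * Gᵀ) i i with hc_def
    have hGtG : Gᵀ * G = 1 := by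
      rw [hG_def, Matrix.transpose_mul, Matrix.transpose_transpose, Matrix.mul_assoc,
        ← Matrix.mul_assoc U, hUUt, Matrix.one_mul, hM]
    have hMval : frobSq (Mᵀ * Z) = ∑ i, μ i * c i := by
      rw [htr M, hspec]
      have e : Mᵀ * (U * Matrix.diagonal μ * Uᵀ) * M = Gᵀ * (Matrix.diagonal μ * G) := by
        rw [hG_def, Matrix.transpose_mul, Matrix.transpose_transpose]
        simp only [Matrix.mul_assoc]
      rw [e, Matrix.trace_mul_comm, Matrix.mul_assoc]
      simp [Matrix.trace, Matrix.diag, Matrix.diagonal_mul, hc_def]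
    -- properties of c
    have hc0 : ∀ i, 0 ≤ c i := by
      intro i
      have : c i = ∑ j, (G i j) ^ 2 := by
        simp [hc_def, Matrix.mul_apply, sq]
      rw [this]
      exact Finset.sum_nonneg fun j _ => sq_nonneg _
    have hc1 : ∀ i, c i ≤ 1 := by
      intro i
      set H : Matrix (Fin n) (Fin n) ℝ := G * Gᵀ with hH_def
      have hHH : H * H = H := by
        rw [hH_def, Matrix.mul_assoc, ← Matrix.mul_assoc Gᵀ, hGtG, Matrix.one_mul]
      have hHsym : Hᵀ = H := by
        rw [hH_def, Matrix.transpose_mul, Matrix.transpose_transpose]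
      have hsq : H i i = ∑ k, (H i k) ^ 2 := by
        conv_lhs => rw [← hHH]
        rw [Matrix.mul_apply]
        refine Finset.sum_congr rfl fun k _ => ?_
        have hki : H k i = H i k := congrFun (congrFun hHsym i) k
        rw [hki, sq]
      have hle : (H i i) ^ 2 ≤ H i i := by
        conv_rhs => rw [hsq]
        exact Finset.single_le_sum (fun k _ => sq_nonneg (H i k)) (Finset.mem_univ i)
      have : c i = H i i := rfl
      nlinarith [hle, this]
    set T : Finset (Fin n) := Finset.image ι Finset.univ with hT_def
    have hTcard : T.card = rM := by
      rw [hT_def, Finset.card_image_of_injective _ hι, Finset.card_univ, Fintype.card_fin]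
    have hsum : ∑ i, c i = (T.card : ℝ) := by
      have h1 : ∑ i, c i = Matrix.trace (G * Gᵀ) := by
        simp [hc_def, Matrix.trace, Matrix.diag]
      rw [h1, Matrix.trace_mul_comm, hGtG, Matrix.trace_one, hTcard]
      simp
    have hsumT : ∑ i ∈ T, μ i = ∑ j, μ (ι j) := by
      rw [hT_def]
      exact Finset.sum_image (fun a _ b _ hab => hι hab)
    rcases Nat.eq_zero_or_pos rM with hrM0 | hrMpos
    · subst hrM0
      have hc_zero : ∀ i, c i = 0 := by
        intro i
        have : c i = ∑ j : Fin 0, (G i j) ^ 2 := by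
          simp [hc_def, Matrix.mul_apply, sq]
        rw [this]; simp
      rw [hMval, hMhval]
      simp [hc_zero]
    · -- threshold
      have hnpos : 0 < n := lt_of_lt_of_le hrMpos hrMn
      set t : ℝ := μ (σ ⟨n - rM, by omega⟩) with ht_def
      have hT1 : ∀ i ∈ T, t ≤ μ i := by
        intro i hi
        rw [hT_def, Finset.mem_image] at hi
        obtain ⟨j, -, rfl⟩ := hi
        have hkval : ((Fin.rev (Fin.castLE hrMn j)) : ℕ) = n - 1 - (j : ℕ) := by
          simp only [Fin.val_rev, Fin.coe_castLE]
          omega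
        have hle : (⟨n - rM, by omega⟩ : Fin n) ≤ Fin.rev (Fin.castLE hrMn j) := by
          rw [Fin.le_def, hkval]
          have hj : (j : ℕ) < rM := j.isLt
          show n - rM ≤ n - 1 - (j : ℕ)
          omega
        exact hmono hle
      have hT2 : ∀ i ∉ T, μ i ≤ t := by
        intro i hi
        set k : Fin n := σ.symm i with hk_def
        have hik : σ k = i := σ.apply_symm_apply i
        have hklt : (k : ℕ) < n - rM := by
          by_contra hge
          push_neg at hge
          have hkn : (k : ℕ) < n := k.isLt
          have hjlt : n - 1 - (k : ℕ) < rM := by omega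
          set j : Fin rM := ⟨n - 1 - (k : ℕ), hjlt⟩ with hj_def
          have hrevj : Fin.rev (Fin.castLE hrMn j) = k := by
            apply Fin.ext
            rw [Fin.val_rev]
            simp [hj_def]
            omega
          have : ι j = i := by rw [hι_def]; simp only []; rw [hrevj, hik]
          exact hi (by rw [hT_def, Finset.mem_image]; exact ⟨j, Finset.mem_univ j, this⟩)
        have hle : k ≤ (⟨n - rM, by omega⟩ : Fin n) := by
          rw [Fin.le_def]
          exact le_of_lt hklt
        have := hmono hle
        rwa [Function.comp_apply, Function.comp_apply, hik] at this
      rw [hMval, hMhval, ← hsumT]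
      exact weighted_sum_le μ c T t hc0 hc1 hsum hT1 hT2
  linarith
end
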